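/- Let A be a domain of characteristic p > 0 that is an algebra over a finite field 𝔽 contained in A, with fraction field K and algebraic closure K̄ of K. An element g ∈ GL_n(A) has all eigenvalues (in K̄) of finite multiplicative order if and only if its characteristic polynomial has coefficients in 𝔽. -/

import Mathlib

open Polynomial

lemma coeff_prod_mem_aux {F R : Type*} [CommRing F] [CommRing R] [Algebra F R]
    (T : Subalgebra F R) (s : Multiset R) (hs : ∀ a ∈ s, a ∈ T) (i : ℕ) :
    ((s.map fun a => Polynomial.X - Polynomial.C a).prod).coeff i ∈ T := by
  induction s using Multiset.induction generalizing i with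
  | empty =>
      simp only [Multiset.map_zero, Multiset.prod_zero, Polynomial.coeff_one]
      split
      · exact T.one_mem
      · exact T.zero_mem
  | cons a s ih =>
      have ha : a ∈ T := hs a (Multiset.mem_cons_self a s)
      have hs' : ∀ b ∈ s, b ∈ T := fun b hb => hs b (Multiset.mem_cons_of_mem hb)
      rw [Multiset.map_cons, Multiset.prod_cons, sub_mul, Polynomial.coeff_sub,
        Polynomial.coeff_C_mul]
      refine T.sub_mem ?_ (T.mul_mem ha (ih hs' i))
      cases i with
      | zero =>
          rw [Polynomial.mul_coeff_zero, Polynomial.coeff_X_zero, zero_mul]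
          exact T.zero_mem
      | succ n =>
          rw [Polynomial.coeff_X_mul]
          exact ih hs' n

set_option maxHeartbeats 1000000 in
set_option synthInstance.maxHeartbeats 400000 in
/-- Let `A` be a domain of characteristic `p > 0` that is an algebra over a finite field `𝔽`
contained in `A` (with the algebraic closure of `𝔽` in the fraction field `K` of `A`
intersecting `A` exactly in `𝔽`), and let `K̄` be an algebraic closure of `K`. An element
`g ∈ GL_n(A)` has all eigenvalues (in `K̄`) of finite multiplicative order if and only if its
characteristic polynomial has coefficients in `𝔽`. -/
theorem statement6 {p : ℕ} (hp : p.Prime) {𝔽 A : Type*} [Field 𝔽] [Fintype 𝔽]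
    [CommRing A] [IsDomain A] [Algebra 𝔽 A] [CharP A p]
    (halg : ∀ a : A, IsAlgebraic 𝔽 a → a ∈ (algebraMap 𝔽 A).range)
    (n : ℕ) (g : (Matrix (Fin n) (Fin n) A)ˣ) :
    (∀ x : AlgebraicClosure (FractionRing A),
        Polynomial.aeval x (Matrix.charpoly (g : Matrix (Fin n) (Fin n) A)) = 0 →
        ∃ k : ℕ, 0 < k ∧ x ^ k = 1) ↔
      (∀ i : ℕ, (Matrix.charpoly (g : Matrix (Fin n) (Fin n) A)).coeff i
          ∈ (algebraMap 𝔽 A).range) := by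
  classical
  set K := FractionRing A
  set L := AlgebraicClosure K
  set P := Matrix.charpoly (g : Matrix (Fin n) (Fin n) A) with hPdef
  have hPmonic : P.Monic := Matrix.charpoly_monic _
  have hinjA : Function.Injective (algebraMap A L) := by
    rw [IsScalarTower.algebraMap_eq A K L]
    exact (algebraMap K L).injective.comp (IsFractionRing.injective A K)
  constructor
  · intro h i
    apply halg
    have := isAlgebraic_algHom_iff (IsScalarTower.toAlgHom 𝔽 A L) hinjA
      (a := P.coeff i)
    rw [← this]
    -- the element is the i-th coefficient of the mapped polynomial
    have hcoeff : (IsScalarTower.toAlgHom 𝔽 A L) (P.coeff i)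
        = (P.map (algebraMap A L)).coeff i := by
      rw [Polynomial.coeff_map]; rfl
    rw [hcoeff]
    set Q : L[X] := P.map (algebraMap A L) with hQ
    have hQmonic : Q.Monic := hPmonic.map _
    have hsplit : Q.Splits := IsAlgClosed.splits Q
    have hroots : ∀ r ∈ Q.roots, r ∈ integralClosure 𝔽 L := by
      intro r hr
      have hr0 : Polynomial.aeval r P = 0 := by
        have := (Polynomial.mem_roots hQmonic.ne_zero).1 hr
        rw [Polynomial.IsRoot] at this
        rwa [Polynomial.aeval_def, ← Polynomial.eval_map]
      obtain ⟨k, hk, hrk⟩ := h r hr0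
      refine ⟨Polynomial.X ^ k - 1, Polynomial.monic_X_pow_sub_C 1 hk.ne', ?_⟩
      simp only [eval₂_sub, eval₂_pow, eval₂_X, eval₂_one]
      rw [hrk]
      ring
    have hQeq : Q = (Q.roots.map fun a => Polynomial.X - Polynomial.C a).prod :=
      hsplit.eq_prod_roots_of_monic hQmonic
    have hmem : Q.coeff i ∈ integralClosure 𝔽 L := by
      rw [hQeq]
      exact coeff_prod_mem_aux _ _ hroots i
    exact (hmem : IsIntegral 𝔽 (Q.coeff i)).isAlgebraic
  · intro h x hx
    -- lift P to a polynomial over 𝔽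
    have hlift : P ∈ Polynomial.lifts (algebraMap 𝔽 A) := by
      rw [Polynomial.lifts_iff_coeff_lifts]
      intro j
      obtain ⟨c, hc⟩ := h j
      exact ⟨c, hc⟩
    obtain ⟨Qf, hQf⟩ := (Polynomial.mem_lifts _).1 hlift
    have hQf0 : Qf ≠ 0 := by
      intro h0
      rw [h0, Polynomial.map_zero] at hQf
      exact hPmonic.ne_zero hQf.symm
    have halgx : IsAlgebraic 𝔽 x := by
      refine ⟨Qf, hQf0, ?_⟩
      have : Polynomial.aeval x (Qf.map (algebraMap 𝔽 A)) = 0 := by rw [hQf]; exact hx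
      rwa [Polynomial.aeval_map_algebraMap] at this
    have hint : IsIntegral 𝔽 x := halgx.isIntegral
    -- x ≠ 0
    have hx0 : x ≠ 0 := by
      intro h0
      have hdet : IsUnit (g : Matrix (Fin n) (Fin n) A).det :=
        (Matrix.isUnit_iff_isUnit_det _).1 g.isUnit
      have hc0 : algebraMap A L (P.coeff 0) = 0 := by
        have : Polynomial.aeval (0 : L) P = 0 := h0 ▸ hx
        rwa [Polynomial.aeval_def, Polynomial.eval₂_at_zero] at this
      have hc0' : P.coeff 0 = 0 := by
        apply hinjA
        rw [hc0, map_zero]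
      have : (g : Matrix (Fin n) (Fin n) A).det = 0 := by
        rw [Matrix.det_eq_sign_charpoly_coeff, ← hPdef, hc0', mul_zero]
      exact hdet.ne_zero this
    -- x lies in a finite subring, hence has finite multiplicative order
    set S := Algebra.adjoin 𝔽 ({x} : Set L) with hS
    haveI : Module.Finite 𝔽 S := ⟨(Submodule.fg_top _).mpr hint.fg_adjoin_singleton⟩
    haveI : Finite S := Module.finite_of_finite 𝔽
    set y : S := ⟨x, Algebra.self_mem_adjoin_singleton 𝔽 x⟩ with hy
    have hy0 : y ≠ 0 := by
      intro h0
      apply hx0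
      exact congrArg Subtype.val h0
    obtain ⟨a, b, hab, hpow⟩ : ∃ a b : ℕ, a < b ∧ y ^ a = y ^ b := by
      obtain ⟨a, b, hne, heq⟩ := Finite.exists_ne_map_eq_of_infinite fun k : ℕ => y ^ k
      rcases lt_or_gt_of_ne hne with hlt | hgt
      · exact ⟨a, b, hlt, heq⟩
      · exact ⟨b, a, hgt, heq.symm⟩
    refine ⟨b - a, Nat.sub_pos_of_lt hab, ?_⟩
    have hyk : y ^ (b - a) = 1 := by
      have hb : b = a + (b - a) := (Nat.add_sub_cancel' hab.le).symm
      have : y ^ a * y ^ (b - a) = y ^ a * 1 := by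
        rw [mul_one, ← pow_add, ← hb, hpow]
      exact mul_left_cancel₀ (pow_ne_zero a hy0) this
    have := congrArg (Subtype.val : S → L) hyk
    simpa using this
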